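/- There is a regular theory (in a language with a binary relation ≤ and a ternary relation xy↓z) whose models in any regular category are exactly the ordered partial combinatory algebras: the axioms state that ≤ is a partial order, application is single-valued and monotone with downward closed domain, and, for a finite basis of partial combinatory arrows, that each has an inhabited predicate of realizers. -/

import Mathlib

open CategoryTheory CategoryTheory.Limits

universe w v u v₁ u₁ v₂ u₂ v₃ u₃

namespace RRC

variable {E : Type u} [Category.{v} E]

/-- A cover is a regular epimorphism. -/
def IsCover {X Y : E} (f : X ⟶ Y) : Prop := Nonempty (RegularEpi f)

/-- A regular category: finite limits, pullback-stable regular-epi/mono image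
factorizations. -/
class RegularCat (E : Type u) [Category.{v} E] : Prop where
  hasFiniteLimits : HasFiniteLimits E
  hasImages : HasImages E
  coverFactorThruImage : ∀ {X Y : E} (f : X ⟶ Y),
    haveI := hasImages; haveI := hasFiniteLimits; IsCover (factorThruImage f)
  coverStable : ∀ {P X Y Z : E} (fst : P ⟶ X) (snd : P ⟶ Y) (f : X ⟶ Z) (g : Y ⟶ Z),
    IsPullback fst snd f g → IsCover g → IsCover fst

attribute [instance] RegularCat.hasFiniteLimits RegularCat.hasImages

/-- A Heyting-algebra structure on a partial order (with all data pinned to the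
given order). -/
structure HeytingOn (α : Type w) [PartialOrder α] where
  sup : α → α → α
  inf : α → α → α
  himp : α → α → α
  bot : α
  top : α
  le_top : ∀ a, a ≤ top
  bot_le : ∀ a, bot ≤ a
  inf_le_left : ∀ a b, inf a b ≤ a
  inf_le_right : ∀ a b, inf a b ≤ b
  le_inf : ∀ a b c, a ≤ b → a ≤ c → a ≤ inf b c
  le_sup_left : ∀ a b, a ≤ sup a b
  le_sup_right : ∀ a b, b ≤ sup a b
  sup_le : ∀ a b c, a ≤ c → b ≤ c → sup a b ≤ c
  le_himp_iff : ∀ a b c, a ≤ himp b c ↔ inf a b ≤ c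

/-- Both adjoints `∃_f ⊣ f⁻¹ ⊣ ∀_f` to the pullback map on subobject lattices. -/
structure SubAdjoints {X Y : E} (f : X ⟶ Y) : Type (max u v) where
  pb : Subobject Y → Subobject X
  pb_spec : ∀ (S : Subobject Y) {Γ : E} (g : Γ ⟶ X), (pb S).Factors g ↔ S.Factors (g ≫ f)
  ex : Subobject X → Subobject Y
  all : Subobject X → Subobject Y
  gc_ex : ∀ (S : Subobject X) (T : Subobject Y), ex S ≤ T ↔ S ≤ pb T
  gc_all : ∀ (T : Subobject Y) (S : Subobject X), pb T ≤ S ↔ T ≤ all S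

/-- A Heyting category: a regular category where each subobject lattice is a
Heyting algebra and each pullback map on subobjects has both adjoints. -/
class HeytingCat (E : Type u) [Category.{v} E] : Prop where
  toRegularCat : RegularCat E
  heyting : ∀ X : E, Nonempty (HeytingOn (Subobject X))
  adjoints : ∀ {X Y : E} (f : X ⟶ Y), Nonempty (SubAdjoints f)

attribute [instance] HeytingCat.toRegularCat

/-- A regular functor: preserves finite limits and covers (regular epis). -/
structure IsRegularFunctor {C : Type u₁} [Category.{v₁} C] {D : Type u₂} [Category.{v₂} D]
    (F : C ⥤ D) : Prop where
  preservesFiniteLimits : PreservesFiniteLimits F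
  preservesCovers : ∀ {X Y : C} (f : X ⟶ Y), IsCover f → IsCover (F.map f)

/-- The image of a subobject under a functor (defaults to `⊤` if the functor fails
to preserve the monomorphism). -/
noncomputable def mapSub {C : Type u₁} [Category.{v₁} C] {D : Type u₂} [Category.{v₂} D]
    (F : C ⥤ D) {X : C} (S : Subobject X) : Subobject (F.obj X) :=
  haveI := Classical.propDecidable (Mono (F.map S.arrow))
  if h : Mono (F.map S.arrow) then @Subobject.mk _ _ _ _ (F.map S.arrow) h else ⊤

section OPAS

variable (E) [HasFiniteLimits E]

/-- An ordered partial applicative structure internal to `E`: a partial order `le`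
and a monotone partial binary application with downward closed domain, all
expressed via generalized elements. -/
structure OPAS where
  A : E
  le : Subobject (A ⨯ A)
  le_refl : ∀ {Γ : E} (x : Γ ⟶ A), le.Factors (prod.lift x x)
  le_antisymm : ∀ {Γ : E} (x y : Γ ⟶ A),
    le.Factors (prod.lift x y) → le.Factors (prod.lift y x) → x = y
  le_trans : ∀ {Γ : E} (x y z : Γ ⟶ A),
    le.Factors (prod.lift x y) → le.Factors (prod.lift y z) → le.Factors (prod.lift x z)
  dom : Subobject (A ⨯ A)
  app : (dom : E) ⟶ A
  dom_down : ∀ {Γ : E} (a b c d : Γ ⟶ A),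
    le.Factors (prod.lift a b) → le.Factors (prod.lift c d) →
    dom.Factors (prod.lift b d) → dom.Factors (prod.lift a c)
  app_mono : ∀ {Γ : E} (a b c d : Γ ⟶ A) (hab : le.Factors (prod.lift a b))
    (hcd : le.Factors (prod.lift c d)) (h : dom.Factors (prod.lift b d)),
    le.Factors (prod.lift (dom.factorThru (prod.lift a c) (dom_down a b c d hab hcd h) ≫ app)
      (dom.factorThru (prod.lift b d) h ≫ app))

end OPAS

variable [HasFiniteLimits E]

/-- `x ≤ y` for generalized elements of an OPAS. -/
def OPAS.Le (S : OPAS E) {Γ : E} (x y : Γ ⟶ S.A) : Prop := S.le.Factors (prod.lift x y)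

/-- `x · y ↓ z` for generalized elements of an OPAS. -/
def OPAS.App (S : OPAS E) {Γ : E} (x y z : Γ ⟶ S.A) : Prop :=
  ∃ h : S.dom.Factors (prod.lift x y), S.dom.factorThru (prod.lift x y) h ≫ S.app = z

/-- Applicative terms in `n` variables (built from projections/variables by
pointwise application); these present the partial combinatory arrows `Aⁿ ⇀ A`. -/
inductive PTerm : ℕ → Type where
  | var {n : ℕ} : Fin n → PTerm n
  | app {n : ℕ} : PTerm n → PTerm n → PTerm n

/-- Weakening of an applicative term. -/
def PTerm.weaken : {n : ℕ} → PTerm n → PTerm (n + 1)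
  | _, .var i => .var i.castSucc
  | _, .app s t => .app s.weaken t.weaken

/-- The term `x₀ x₁ ⋯ xₙ` (iterated application of the extra first variable). -/
def iterTerm : (n : ℕ) → PTerm (n + 1)
  | 0 => .var 0
  | n + 1 => .app (iterTerm n).weaken (.var (Fin.last (n + 1)))

/-- Evaluation (Kleene equality style) of an applicative term on generalized
elements of an OPAS. -/
def OPAS.Eval (S : OPAS E) {Γ : E} : {n : ℕ} → PTerm n → (Fin n → (Γ ⟶ S.A)) → (Γ ⟶ S.A) → Prop
  | _, .var i, x, z => z = x i
  | _, .app s t, x, z => ∃ u v, S.Eval s x u ∧ S.Eval t x v ∧ S.App u v z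

/-- `r` represents the partial combinatory arrow `t` (at its stage of definition):
at every later stage, whenever `t` is defined on a tuple `x` with value `v`, the
iterated application `r x₁ ⋯ xₙ` is defined with value `≤ v`. -/
def OPAS.RepresentsAt (S : OPAS E) {n : ℕ} (t : PTerm n) {Γ : E} (r : Γ ⟶ S.A) : Prop :=
  ∀ (Δ : E) (g : Δ ⟶ Γ) (x : Fin n → (Δ ⟶ S.A)) (v : Δ ⟶ S.A),
    S.Eval t x v → ∃ y : Δ ⟶ S.A, S.Le y v ∧ S.Eval (iterTerm n) (Fin.cons (g ≫ r) x) y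

/-- A subobject is inhabited when its support is the whole terminal object. -/
def Inhab {X : E} (U : Subobject X) : Prop :=
  ∃ (Γ : E) (e : Γ ⟶ ⊤_ E) (a : Γ ⟶ X), IsCover e ∧ U.Factors a

/-- Two subobjects intersect when their intersection is inhabited. -/
def Intersects {X : E} (U V : Subobject X) : Prop :=
  ∃ (Γ : E) (e : Γ ⟶ ⊤_ E) (a : Γ ⟶ X), IsCover e ∧ U.Factors a ∧ V.Factors a

/-- An ordered partial combinatory algebra: an OPAS in which every partial
combinatory arrow is representable (the object of realizers is inhabited). -/
structure OPCA (E : Type u) [Category.{v} E] [HasFiniteLimits E] extends OPAS E where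
  complete : ∀ {n : ℕ} (t : PTerm n), ∃ (Γ : E) (e : Γ ⟶ ⊤_ E) (r : Γ ⟶ toOPAS.A),
    IsCover e ∧ toOPAS.RepresentsAt t r

/-- An OPCA pair `(A', A)`: an OPAS `A` with a subobject `A'` that is closed under
the application of `A` and such that the object of realizers of every partial
combinatory arrow of `A` intersects `A'`. -/
structure OPCAPair (E : Type u) [Category.{v} E] [HasFiniteLimits E] where
  S : OPAS E
  A' : Subobject S.A
  closed : ∀ {Γ : E} (x y z : Γ ⟶ S.A),
    A'.Factors x → A'.Factors y → S.App x y z → A'.Factors z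
  complete : ∀ {n : ℕ} (t : PTerm n), ∃ (Γ : E) (e : Γ ⟶ ⊤_ E) (r : Γ ⟶ S.A),
    IsCover e ∧ A'.Factors r ∧ S.RepresentsAt t r

/-- The underlying object of realizers of an OPCA pair. -/
abbrev OPCAPair.A (P : OPCAPair E) : E := P.S.A

/-- An `F`-filter for a regular functor `F` out of `E`: a subobject of `F A` that
is upward closed, closed under application, and meets `F U` whenever `U ⊆ A`
intersects `A'`. -/
structure RFilter {C : Type u₁} [Category.{v₁} C] (P : OPCAPair E) (F : E ⥤ C) where
  carrier : Subobject (F.obj P.A)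
  upward : ∀ {Γ : C} (p : Γ ⟶ F.obj (P.A ⨯ P.A)),
    (mapSub F P.S.le).Factors p → carrier.Factors (p ≫ F.map prod.fst) →
    carrier.Factors (p ≫ F.map prod.snd)
  app_closed : ∀ {Γ : C} (p : Γ ⟶ F.obj ((P.S.dom : E))),
    carrier.Factors (p ≫ F.map (P.S.dom.arrow ≫ prod.fst)) →
    carrier.Factors (p ≫ F.map (P.S.dom.arrow ≫ prod.snd)) →
    carrier.Factors (p ≫ F.map P.S.app)
  meets : ∀ U : Subobject P.A, Intersects U P.A' →
    ∃ (Γ : C) (e : Γ ⟶ F.obj (⊤_ E)) (a : Γ ⟶ F.obj P.A),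
      IsCover e ∧ (mapSub F U).Factors a ∧ carrier.Factors a

/-- A morphism of regular models `(F, Cf) → (G, Df)`: the isomorphism `η`
restricts to an isomorphism between the image of the filter `Cf` and `Df`. -/
def FilterIso {C : Type u₁} [Category.{v₁} C] {D : Type u₂} [Category.{v₂} D]
    (P : OPCAPair E) (F : E ⥤ C) (G : E ⥤ D) (Cf : RFilter P F) (Df : RFilter P G)
    (H : C ⥤ D) (η : F ⋙ H ≅ G) : Prop :=
  Subobject.mk ((mapSub H Cf.carrier).arrow ≫ η.hom.app P.A) = Df.carrier

end RRC

namespace RRC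

set_option linter.unusedSectionVars false

open CategoryTheory CategoryTheory.Limits

/-- A relational first-order language. -/
structure RegLang where
  Rel : Type
  arity : Rel → ℕ

/-- Regular formulas in context `n`: built from `⊤`, equality, relation symbols,
`∧` and `∃`. -/
inductive RegFormula (L : RegLang) : ℕ → Type
  | verum {n : ℕ} : RegFormula L n
  | eq {n : ℕ} : Fin n → Fin n → RegFormula L n
  | rel {n : ℕ} (r : L.Rel) : (Fin (L.arity r) → Fin n) → RegFormula L n
  | and {n : ℕ} : RegFormula L n → RegFormula L n → RegFormula L n
  | ex {n : ℕ} : RegFormula L (n + 1) → RegFormula L n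

/-- A regular sequent `φ ⊢ ψ` in context `ctx`. -/
structure RegSequent (L : RegLang) where
  ctx : ℕ
  lhs : RegFormula L ctx
  rhs : RegFormula L ctx

/-- A regular theory: a set of regular sequents. -/
structure RegTheory (L : RegLang) where
  axioms : Set (RegSequent L)

variable {E : Type u} [Category.{v} E] [HasFiniteLimits E]

/-- Finite powers of an object. -/
noncomputable def npow (A : E) : ℕ → E
  | 0 => ⊤_ E
  | n + 1 => A ⨯ npow A n

attribute [reducible] npow

/-- Tupling of generalized elements. -/
noncomputable def tupleLift {A Γ : E} : {n : ℕ} → (Fin n → (Γ ⟶ A)) → (Γ ⟶ npow A n)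
  | 0, _ => terminal.from Γ
  | _ + 1, x => prod.lift (x 0) (tupleLift (fun i => x i.succ))

/-- An `L`-structure in a category: a carrier with an interpretation of each
relation symbol as a subobject of the corresponding finite power. -/
structure RegStructure (L : RegLang) (E : Type u) [Category.{v} E] [HasFiniteLimits E] where
  carrier : E
  interp : ∀ r : L.Rel, Subobject (npow carrier (L.arity r))

/-- Satisfaction of a regular formula on generalized elements; existential
quantification is interpreted by covers (regular epimorphisms). -/
def RegStructure.Sat {L : RegLang} (M : RegStructure L E) :
    {n : ℕ} → {Γ : E} → RegFormula L n → (Fin n → (Γ ⟶ M.carrier)) → Prop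
  | _, _, .verum, _ => True
  | _, _, .eq i j, x => x i = x j
  | _, _, .rel r f, x => (M.interp r).Factors (tupleLift (fun k => x (f k)))
  | _, _, .and φ ψ, x => M.Sat φ x ∧ M.Sat ψ x
  | _, Γ, .ex φ, x => ∃ (Δ : E) (e : Δ ⟶ Γ), IsCover e ∧
      ∃ w : Δ ⟶ M.carrier, M.Sat φ (Fin.snoc (fun i => e ≫ x i) w)

/-- A model of a regular theory. -/
def RegStructure.IsModel {L : RegLang} (M : RegStructure L E) (T : RegTheory L) : Prop :=
  ∀ s ∈ T.axioms, ∀ {Γ : E} (x : Fin s.ctx → (Γ ⟶ M.carrier)),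
    M.Sat s.lhs x → M.Sat s.rhs x

/-! ### Auxiliary lemmas -/

lemma isCover_id (X : E) : IsCover (𝟙 X) := ⟨RegularEpi.ofIso (Iso.refl X)⟩

lemma IsCover.epi' {X Y : E} {f : X ⟶ Y} (h : IsCover f) : Epi f := by
  exact RegularEpi.epi f h.some

lemma factors_of_cover {X Γ Δ : E} (P : Subobject X) {q : Δ ⟶ Γ} (hq : IsCover q)
    (f : Γ ⟶ X) (h : P.Factors (q ≫ f)) : P.Factors f := by
  haveI := hq.some
  haveI : StrongEpi q := by haveI := isRegularEpi_of_regularEpi hq.some; infer_instance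
  haveI := StrongEpi.llp (f := q) P.arrow
  have sq : CommSq (P.factorThru _ h) q P.arrow f := ⟨by simp⟩
  have : sq.lift ≫ P.arrow = f := sq.fac_right
  rw [← this]
  exact Subobject.factors_comp_arrow _

lemma mkFactors_iff {X Y Γ : E} (m : Y ⟶ X) [Mono m] (g : Γ ⟶ X) :
    (Subobject.mk m).Factors g ↔ ∃ k : Γ ⟶ Y, k ≫ m = g := by
  constructor
  · intro h
    refine ⟨(Subobject.mk m).factorThru g h ≫ (Subobject.underlyingIso m).hom, ?_⟩
    rw [Category.assoc, Subobject.underlyingIso_hom_comp_eq_mk, Subobject.factorThru_arrow]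
  · rintro ⟨k, rfl⟩
    rw [show k ≫ m = (k ≫ (Subobject.underlyingIso m).inv) ≫ (Subobject.mk m).arrow by
      rw [Category.assoc, Subobject.underlyingIso_arrow]]
    exact Subobject.factors_comp_arrow _

lemma factors_iff' {X Γ : E} (P : Subobject X) (f : Γ ⟶ X) :
    P.Factors f ↔ ∃ k : Γ ⟶ (P : E), k ≫ P.arrow = f :=
  ⟨fun h => ⟨P.factorThru f h, by simp⟩, fun ⟨k, hk⟩ => hk ▸ Subobject.factors_comp_arrow k⟩

lemma factors_precomp {X Γ Δ : E} (P : Subobject X) {f : Γ ⟶ X} (g : Δ ⟶ Γ)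
    (h : P.Factors f) : P.Factors (g ≫ f) := Subobject.factors_of_factors_right g h

lemma tupleLift_comp {A Γ Δ : E} (g : Δ ⟶ Γ) :
    ∀ {n : ℕ} (x : Fin n → (Γ ⟶ A)), g ≫ tupleLift x = tupleLift (fun i => g ≫ x i)
  | 0, _ => by apply terminal.hom_ext
  | n + 1, x => by
    simp only [tupleLift, prod.comp_lift]
    rw [tupleLift_comp g (fun i => x i.succ)]

lemma eta2 {α : Type*} (w : Fin 2 → α) : w = ![w 0, w 1] := by
  funext k; fin_cases k <;> rfl

lemma eta3 {α : Type*} (w : Fin 3 → α) : w = ![w 0, w 1, w 2] := by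
  funext k; fin_cases k <;> rfl

/-! ### The language and theory -/

/-- Relation symbols: order, application, and a realizer predicate for each term. -/
inductive LRel : Type
  | le : LRel
  | ap : LRel
  | rt : ∀ n : ℕ, PTerm n → LRel

/-- The language of ordered partial combinatory algebras. -/
abbrev Lg : RegLang :=
  ⟨LRel, fun r => match r with | .le => 2 | .ap => 3 | .rt _ _ => 1⟩

abbrev leF {m : ℕ} (i j : Fin m) : RegFormula Lg m := .rel .le ![i, j]
abbrev apF {m : ℕ} (i j k : Fin m) : RegFormula Lg m := .rel .ap ![i, j, k]
abbrev rtF {m n : ℕ} (t : PTerm n) (i : Fin m) : RegFormula Lg m := .rel (.rt n t) ![i]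

/-- The formula expressing `t(x⃗) ↓ x_out`. -/
def evalFml : {n m : ℕ} → PTerm n → (Fin n → Fin m) → Fin m → RegFormula Lg m
  | _, _, .var i, inj, out => .eq out (inj i)
  | _, m, .app s u, inj, out =>
      .ex (.ex (.and (evalFml s (fun i => (inj i).castSucc.castSucc) (Fin.last m).castSucc)
        (.and (evalFml u (fun i => (inj i).castSucc.castSucc) (Fin.last (m + 1)))
          (apF ((Fin.last m).castSucc) (Fin.last (m + 1)) (out.castSucc.castSucc)))))

def axRefl : RegSequent Lg := ⟨1, .verum, leF 0 0⟩
def axAntisym : RegSequent Lg := ⟨2, .and (leF 0 1) (leF 1 0), .eq 0 1⟩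
def axTrans : RegSequent Lg := ⟨3, .and (leF 0 1) (leF 1 2), leF 0 2⟩
def axSV : RegSequent Lg := ⟨4, .and (apF 0 1 2) (apF 0 1 3), .eq 2 3⟩
def axMono : RegSequent Lg :=
  ⟨5, .and (leF 0 1) (.and (leF 2 3) (apF 1 3 4)), .ex (.and (apF 0 2 5) (leF 5 4))⟩
def axInhab {n : ℕ} (t : PTerm n) : RegSequent Lg := ⟨0, .verum, .ex (rtF t 0)⟩
def axRep {n : ℕ} (t : PTerm n) : RegSequent Lg :=
  ⟨n + 2,
   .and (rtF t (Fin.last (n + 1))) (evalFml t (fun i => i.castSucc.castSucc) ((Fin.last n).castSucc)),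
   .ex (.and (leF (Fin.last (n + 2)) ((Fin.last n).castSucc.castSucc))
     (evalFml (iterTerm n)
       (Fin.cases ((Fin.last (n + 1)).castSucc) (fun i => i.castSucc.castSucc.castSucc))
       (Fin.last (n + 2))))⟩

/-- The regular theory of ordered partial combinatory algebras. -/
def Tg : RegTheory Lg :=
  ⟨{s | s = axRefl ∨ s = axAntisym ∨ s = axTrans ∨ s = axSV ∨ s = axMono ∨
      ∃ (n : ℕ) (t : PTerm n), s = axInhab t ∨ s = axRep t}⟩

/-! ### Product bookkeeping -/

noncomputable def i1 (A : E) : A ⟶ npow A 1 := prod.lift (𝟙 A) (terminal.from A)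
noncomputable def i2 (A : E) : A ⨯ A ⟶ npow A 2 :=
  prod.lift prod.fst (prod.lift prod.snd (terminal.from _))
noncomputable def e2 (A : E) : npow A 2 ⟶ A ⨯ A :=
  prod.lift prod.fst (prod.snd ≫ prod.fst)
noncomputable def p31 (A : E) : npow A 3 ⟶ A := prod.fst
noncomputable def p32 (A : E) : npow A 3 ⟶ A := prod.snd ≫ prod.fst
noncomputable def p33 (A : E) : npow A 3 ⟶ A := prod.snd ≫ prod.snd ≫ prod.fst
noncomputable def e31 (A : E) : npow A 3 ⟶ A ⨯ A := prod.lift (p31 A) (p32 A)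

lemma i2_e2 (A : E) : i2 A ≫ e2 A = 𝟙 _ := by
  apply Limits.prod.hom_ext <;> simp only [i2, e2, Category.assoc, Category.id_comp]
  · erw [prod.lift_fst, prod.lift_fst]
  · erw [prod.lift_snd, prod.lift_snd_assoc, prod.lift_fst]

lemma e2_i2 (A : E) : e2 A ≫ i2 A = 𝟙 _ := by
  apply Limits.prod.hom_ext
  · simp only [i2, e2, Category.assoc, Category.id_comp]
    erw [prod.lift_fst, prod.lift_fst]
  · apply Limits.prod.hom_ext
    · simp only [i2, e2, Category.assoc, Category.id_comp]
      erw [prod.lift_snd_assoc, prod.lift_fst, prod.lift_snd]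
    · apply terminal.hom_ext

instance i2_mono (A : E) : Mono (i2 A) := by
  exact mono_of_mono_fac (i2_e2 A)

instance e2_mono (A : E) : Mono (e2 A) := by
  exact mono_of_mono_fac (e2_i2 A)

instance i1_mono (A : E) : Mono (i1 A) := by
  have : i1 A ≫ prod.fst = 𝟙 A := prod.lift_fst _ _
  exact mono_of_mono_fac this

lemma isIso_e2 (A : E) : IsIso (e2 A) := ⟨i2 A, e2_i2 A, i2_e2 A⟩

lemma tuple1 {A Γ : E} (x : Γ ⟶ A) : tupleLift ![x] = x ≫ i1 A := by
  simp only [tupleLift, i1, prod.comp_lift, Category.comp_id]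
  congr 1
  apply terminal.hom_ext

lemma tuple2 {A Γ : E} (x y : Γ ⟶ A) : tupleLift ![x, y] = prod.lift x y ≫ i2 A := by
  simp only [tupleLift, i2, prod.comp_lift, prod.lift_fst, prod.lift_snd]
  show prod.lift x (prod.lift (![x,y] (Fin.succ 0)) (terminal.from Γ)) = _
  congr 2
  apply terminal.hom_ext

lemma tuple3 {A Γ : E} (x y : Γ ⟶ npow A 3)
    (h1 : x ≫ p31 A = y ≫ p31 A) (h2 : x ≫ p32 A = y ≫ p32 A)
    (h3 : x ≫ p33 A = y ≫ p33 A) : x = y := by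
  apply Limits.prod.hom_ext
  · exact h1
  · apply Limits.prod.hom_ext
    · exact (Category.assoc _ _ _).trans (h2.trans (Category.assoc _ _ _).symm)
    · apply Limits.prod.hom_ext
      · exact ((Category.assoc _ _ _).trans (Category.assoc _ _ _)).trans
          (h3.trans ((Category.assoc _ _ _).trans (Category.assoc _ _ _)).symm)
      · apply terminal.hom_ext

lemma tuple3_comp {A Γ : E} (x y z : Γ ⟶ A) :
    (tupleLift ![x, y, z] ≫ p31 A = x) ∧ (tupleLift ![x, y, z] ≫ p32 A = y) ∧
      (tupleLift ![x, y, z] ≫ p33 A = z) := by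
  refine ⟨?_, ?_, ?_⟩ <;> simp [tupleLift, p31, p32, p33]
  · erw [prod.lift_fst]
  · erw [prod.lift_snd_assoc, prod.lift_fst]
  · erw [prod.lift_snd_assoc, prod.lift_snd_assoc, prod.lift_fst]

/-! ### OPAS-level lemmas -/

namespace OPAS

variable (S : OPAS E)

lemma app_precomp {Γ Δ : E} {x y z : Γ ⟶ S.A} (g : Δ ⟶ Γ) (h : S.App x y z) :
    S.App (g ≫ x) (g ≫ y) (g ≫ z) := by
  obtain ⟨hf, rfl⟩ := h
  have hf' : S.dom.Factors (prod.lift (g ≫ x) (g ≫ y)) := by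
    rw [← prod.comp_lift]; exact factors_precomp _ g hf
  refine ⟨hf', ?_⟩
  have : S.dom.factorThru (prod.lift (g ≫ x) (g ≫ y)) hf'
      = g ≫ S.dom.factorThru (prod.lift x y) hf := by
    rw [← cancel_mono S.dom.arrow]
    simp [prod.comp_lift]
  rw [this, Category.assoc]

lemma app_unique {Γ : E} {x y z z' : Γ ⟶ S.A} (h : S.App x y z) (h' : S.App x y z') :
    z = z' := by
  obtain ⟨hf, rfl⟩ := h
  obtain ⟨hf', rfl⟩ := h'
  rfl

lemma eval_precomp {Γ Δ : E} {n : ℕ} {t : PTerm n} {x : Fin n → (Γ ⟶ S.A)} {v : Γ ⟶ S.A}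
    (g : Δ ⟶ Γ) (h : S.Eval t x v) : S.Eval t (fun i => g ≫ x i) (g ≫ v) := by
  induction t generalizing v with
  | var i =>
    simp only [OPAS.Eval] at h ⊢
    rw [h]
  | app s u ihs ihu =>
    simp only [OPAS.Eval] at h ⊢
    obtain ⟨a, b, ha, hb, hab⟩ := h
    exact ⟨g ≫ a, g ≫ b, ihs ha, ihu hb, S.app_precomp g hab⟩

lemma app_descend {Γ Δ : E} {q : Δ ⟶ Γ} (hq : IsCover q) {x y : Γ ⟶ S.A} {v : Δ ⟶ S.A}
    (h : S.App (q ≫ x) (q ≫ y) v) : ∃ v₀ : Γ ⟶ S.A, v = q ≫ v₀ ∧ S.App x y v₀ := by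
  obtain ⟨hf, rfl⟩ := h
  have hf0 : S.dom.Factors (prod.lift x y) := by
    apply factors_of_cover S.dom hq
    rw [prod.comp_lift]; exact hf
  refine ⟨S.dom.factorThru _ hf0 ≫ S.app, ?_, ⟨hf0, rfl⟩⟩
  have : S.dom.factorThru (prod.lift (q ≫ x) (q ≫ y)) hf = q ≫ S.dom.factorThru _ hf0 := by
    rw [← cancel_mono S.dom.arrow]
    simp [prod.comp_lift]
  rw [this, Category.assoc]

lemma eval_descend {Γ Δ : E} {q : Δ ⟶ Γ} (hq : IsCover q) {n : ℕ} {t : PTerm n}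
    {x : Fin n → (Γ ⟶ S.A)} {v : Δ ⟶ S.A} (h : S.Eval t (fun i => q ≫ x i) v) :
    ∃ v₀ : Γ ⟶ S.A, v = q ≫ v₀ ∧ S.Eval t x v₀ := by
  induction t generalizing v with
  | var i =>
    simp only [OPAS.Eval] at h
    exact ⟨x i, h, by simp only [OPAS.Eval]⟩
  | app s u ihs ihu =>
    simp only [OPAS.Eval] at h ⊢
    obtain ⟨a, b, ha, hb, hab⟩ := h
    obtain ⟨a₀, rfl, ha₀⟩ := ihs ha
    obtain ⟨b₀, rfl, hb₀⟩ := ihu hb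
    obtain ⟨v₀, rfl, hv₀⟩ := S.app_descend hq hab
    exact ⟨v₀, rfl, a₀, b₀, ha₀, hb₀, hv₀⟩

end OPAS

/-! ### Satisfaction vs evaluation -/

section SatEval

variable (S : OPAS E) (f : ∀ r : LRel, Subobject (npow S.A (Lg.arity r)))

lemma sat_apF_iff
    (happ : ∀ {Γ : E} (a b c : Γ ⟶ S.A),
      (f LRel.ap).Factors (tupleLift ![a, b, c]) ↔ S.App a b c)
    {m : ℕ} {Γ : E} (x : Fin m → (Γ ⟶ S.A)) (i j k : Fin m) :
    (RegStructure.mk S.A f).Sat (apF i j k) x ↔ S.App (x i) (x j) (x k) := by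
  show (f LRel.ap).Factors (tupleLift fun q => x (![i, j, k] q)) ↔ _
  have : (fun q => x (![i, j, k] q)) = ![x i, x j, x k] := by
    funext q; fin_cases q <;> rfl
  rw [this]
  exact happ _ _ _

lemma sat_leF_iff
    (hle : ∀ {Γ : E} (a b : Γ ⟶ S.A),
      (f LRel.le).Factors (tupleLift ![a, b]) ↔ S.Le a b)
    {m : ℕ} {Γ : E} (x : Fin m → (Γ ⟶ S.A)) (i j : Fin m) :
    (RegStructure.mk S.A f).Sat (leF i j) x ↔ S.Le (x i) (x j) := by
  show (f LRel.le).Factors (tupleLift fun q => x (![i, j] q)) ↔ _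
  have : (fun q => x (![i, j] q)) = ![x i, x j] := by
    funext q; fin_cases q <;> rfl
  rw [this]
  exact hle _ _

lemma sat_ex_iff {L : RegLang} (M : RegStructure L E) {n : ℕ} (φ : RegFormula L (n + 1))
    {Γ : E} (x : Fin n → (Γ ⟶ M.carrier)) :
    M.Sat (.ex φ) x ↔ ∃ (Δ : E) (e : Δ ⟶ Γ), IsCover e ∧
      ∃ w : Δ ⟶ M.carrier, M.Sat φ (Fin.snoc (fun i => e ≫ x i) w) := Iff.rfl

lemma sat_and_iff {L : RegLang} (M : RegStructure L E) {n : ℕ} (φ ψ : RegFormula L n)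
    {Γ : E} (x : Fin n → (Γ ⟶ M.carrier)) :
    M.Sat (.and φ ψ) x ↔ M.Sat φ x ∧ M.Sat ψ x := Iff.rfl

lemma sat_eq_iff {L : RegLang} (M : RegStructure L E) {n : ℕ} (i j : Fin n)
    {Γ : E} (x : Fin n → (Γ ⟶ M.carrier)) :
    M.Sat (.eq i j) x ↔ x i = x j := Iff.rfl

lemma sat_evalFml_of_eval
    (happ : ∀ {Γ : E} (a b c : Γ ⟶ S.A),
      (f LRel.ap).Factors (tupleLift ![a, b, c]) ↔ S.App a b c)
    {n : ℕ} (t : PTerm n) :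
    ∀ {m : ℕ} (inj : Fin n → Fin m) (out : Fin m) {Γ : E} (x : Fin m → (Γ ⟶ S.A)),
    S.Eval t (fun i => x (inj i)) (x out) →
    (RegStructure.mk S.A f).Sat (evalFml t inj out) x := by
  induction t with
  | var i =>
    intro m inj out Γ x h
    simp only [OPAS.Eval] at h
    simp only [evalFml]
    rw [sat_eq_iff]
    exact h
  | app s u ihs ihu =>
    intro m inj out Γ x h
    simp only [OPAS.Eval] at h
    obtain ⟨a, b, ha, hb, hab⟩ := h
    simp only [evalFml]
    rw [sat_ex_iff]
    refine ⟨Γ, 𝟙 Γ, isCover_id Γ, a, ?_⟩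
    rw [sat_ex_iff]
    refine ⟨Γ, 𝟙 Γ, isCover_id Γ, b, ?_⟩
    set x2 : Fin (m + 2) → (Γ ⟶ S.A) :=
      Fin.snoc (fun i => 𝟙 Γ ≫ (Fin.snoc (fun i => 𝟙 Γ ≫ x i) a : Fin (m + 1) → (Γ ⟶ S.A)) i)
        b with hx2
    have c1 : ∀ j : Fin m, x2 (j.castSucc.castSucc) = x j := by
      intro j; simp [hx2, Fin.snoc_castSucc]
    have c2 : x2 ((Fin.last m).castSucc) = a := by
      simp [hx2, Fin.snoc_castSucc, Fin.snoc_last]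
    have c3 : x2 (Fin.last (m + 1)) = b := by simp [hx2, Fin.snoc_last]
    rw [sat_and_iff, sat_and_iff]
    refine ⟨?_, ?_, ?_⟩
    · apply ihs
      have e1 : (fun i => x2 ((inj i).castSucc.castSucc)) = fun i => x (inj i) := by
        funext i; exact c1 (inj i)
      rw [e1, c2]; exact ha
    · apply ihu
      have e1 : (fun i => x2 ((inj i).castSucc.castSucc)) = fun i => x (inj i) := by
        funext i; exact c1 (inj i)
      rw [e1, c3]; exact hb
    · rw [sat_apF_iff S f @happ, c2, c3, c1 out]
      exact hab

lemma eval_of_sat_evalFml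
    (happ : ∀ {Γ : E} (a b c : Γ ⟶ S.A),
      (f LRel.ap).Factors (tupleLift ![a, b, c]) ↔ S.App a b c)
    {n : ℕ} (t : PTerm n) :
    ∀ {m : ℕ} (inj : Fin n → Fin m) (out : Fin m) {Γ : E} (x : Fin m → (Γ ⟶ S.A)),
    (RegStructure.mk S.A f).Sat (evalFml t inj out) x →
    S.Eval t (fun i => x (inj i)) (x out) := by
  induction t with
  | var i =>
    intro m inj out Γ x h
    simp only [evalFml] at h
    rw [sat_eq_iff] at h
    simp only [OPAS.Eval]
    exact h
  | app s u ihs ihu =>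
    intro m inj out Γ x h
    simp only [evalFml] at h
    rw [sat_ex_iff] at h
    obtain ⟨Δ, e, he, a, h⟩ := h
    rw [sat_ex_iff] at h
    obtain ⟨Δ', e', he', b, h⟩ := h
    rw [sat_and_iff, sat_and_iff] at h
    obtain ⟨hs, hu, hap⟩ := h
    set x1 : Fin (m + 1) → (Δ ⟶ S.A) := Fin.snoc (fun i => e ≫ x i) a with hx1
    set x2 : Fin (m + 2) → (Δ' ⟶ S.A) := Fin.snoc (fun i => e' ≫ x1 i) b with hx2
    have E1 := ihs _ _ x2 hs
    have E2 := ihu _ _ x2 hu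
    rw [sat_apF_iff S f @happ] at hap
    have c1 : (fun i => x2 ((inj i).castSucc.castSucc)) = fun i => e' ≫ (e ≫ x (inj i)) := by
      funext i; simp [hx1, hx2, Fin.snoc_castSucc]
    have c2 : x2 ((Fin.last m).castSucc) = e' ≫ a := by
      simp [hx1, hx2, Fin.snoc_castSucc, Fin.snoc_last]
    have c3 : x2 (Fin.last (m + 1)) = b := by simp [hx2, Fin.snoc_last]
    have c4 : x2 (out.castSucc.castSucc) = e' ≫ (e ≫ x out) := by
      simp [hx1, hx2, Fin.snoc_castSucc]
    rw [c1, c2] at E1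
    rw [c1, c3] at E2
    rw [c2, c3, c4] at hap
    have Eapp : S.Eval (.app s u) (fun i => e' ≫ (e ≫ x (inj i))) (e' ≫ (e ≫ x out)) := by
      simp only [OPAS.Eval]
      exact ⟨e' ≫ a, b, E1, E2, hap⟩
    obtain ⟨v₀, hv₀, E3⟩ := S.eval_descend he' Eapp
    haveI := he'.epi'
    have hv : v₀ = e ≫ x out := by
      rw [← cancel_epi e']; exact hv₀.symm
    rw [hv] at E3
    obtain ⟨v₁, hv₁, E5⟩ := S.eval_descend he E3
    haveI := he.epi'
    have hv' : v₁ = x out := by rw [← cancel_epi e]; exact hv₁.symm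
    rw [hv'] at E5
    exact E5

end SatEval

/-! ### From OPCAs to models -/

noncomputable def g3 (S : OPAS E) : (S.dom : E) ⟶ npow S.A 3 :=
  prod.lift (S.dom.arrow ≫ prod.fst)
    (prod.lift (S.dom.arrow ≫ prod.snd) (prod.lift S.app (terminal.from _)))

lemma g3_e31 (S : OPAS E) : g3 S ≫ e31 S.A = S.dom.arrow := by
  apply Limits.prod.hom_ext <;> simp [g3, e31, p31, p32]
  · erw [prod.lift_fst, prod.lift_fst]
  · erw [prod.lift_snd, prod.lift_snd_assoc, prod.lift_fst]

lemma g3_p31 (S : OPAS E) : g3 S ≫ p31 S.A = S.dom.arrow ≫ prod.fst := by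
  simp [g3, p31]; erw [prod.lift_fst]
lemma g3_p32 (S : OPAS E) : g3 S ≫ p32 S.A = S.dom.arrow ≫ prod.snd := by
  simp [g3, p32]; erw [prod.lift_snd_assoc, prod.lift_fst]
lemma g3_p33 (S : OPAS E) : g3 S ≫ p33 S.A = S.app := by
  simp [g3, p33]; erw [prod.lift_snd_assoc, prod.lift_snd_assoc, prod.lift_fst]

instance g3_mono (S : OPAS E) : Mono (g3 S) := by
  have := g3_e31 S
  exact mono_of_mono_fac this

noncomputable def rSrc (O : OPCA E) {n : ℕ} (t : PTerm n) : E := (O.complete t).choose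

noncomputable def rCov (O : OPCA E) {n : ℕ} (t : PTerm n) : rSrc O t ⟶ ⊤_ E :=
  (O.complete t).choose_spec.choose

noncomputable def rMap (O : OPCA E) {n : ℕ} (t : PTerm n) : rSrc O t ⟶ O.toOPAS.A :=
  (O.complete t).choose_spec.choose_spec.choose

lemma rSpec (O : OPCA E) {n : ℕ} (t : PTerm n) :
    IsCover (rCov O t) ∧ O.toOPAS.RepresentsAt t (rMap O t) :=
  (O.complete t).choose_spec.choose_spec.choose_spec

/-- The interpretation of the language induced by an OPCA. -/
noncomputable def fO (O : OPCA E) [HasImages E] :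
    ∀ r : LRel, Subobject (npow O.toOPAS.A (Lg.arity r)) := fun r =>
  match r with
  | .le => Subobject.mk (O.toOPAS.le.arrow ≫ i2 _)
  | .ap => Subobject.mk (g3 O.toOPAS)
  | .rt _ t => Subobject.mk (image.ι (rMap O t ≫ i1 _))

section Dir2

variable [RegularCat E] (O : OPCA E)

lemma hle_O {Γ : E} (a b : Γ ⟶ O.toOPAS.A) :
    (fO O LRel.le).Factors (tupleLift ![a, b]) ↔ O.toOPAS.Le a b := by
  show (Subobject.mk (O.toOPAS.le.arrow ≫ i2 _)).Factors _ ↔ O.toOPAS.le.Factors (prod.lift a b)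
  rw [mkFactors_iff, tuple2, factors_iff']
  constructor
  · rintro ⟨k, hk⟩
    exact ⟨k, by rw [← cancel_mono (i2 O.toOPAS.A), Category.assoc]; exact hk⟩
  · rintro ⟨k, hk⟩
    exact ⟨k, by rw [← Category.assoc, hk]⟩

lemma happ_O {Γ : E} (a b c : Γ ⟶ O.toOPAS.A) :
    (fO O LRel.ap).Factors (tupleLift ![a, b, c]) ↔ O.toOPAS.App a b c := by
  show (Subobject.mk (g3 O.toOPAS)).Factors _ ↔ O.toOPAS.App a b c
  rw [mkFactors_iff]
  obtain ⟨t1, t2, t3⟩ := tuple3_comp (A := O.toOPAS.A) a b c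
  constructor
  · rintro ⟨k, hk⟩
    have ka : k ≫ (O.toOPAS.dom.arrow ≫ prod.fst) = a := by
      rw [← g3_p31, ← Category.assoc, hk, t1]
    have kb : k ≫ (O.toOPAS.dom.arrow ≫ prod.snd) = b := by
      rw [← g3_p32, ← Category.assoc, hk, t2]
    have kc : k ≫ O.toOPAS.app = c := by
      rw [← g3_p33, ← Category.assoc, hk, t3]
    have hd : O.toOPAS.dom.Factors (prod.lift a b) := by
      rw [factors_iff']
      refine ⟨k, ?_⟩
      apply Limits.prod.hom_ext
      · rw [Category.assoc, prod.lift_fst]; exact ka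
      · rw [Category.assoc, prod.lift_snd]; exact kb
    refine ⟨hd, ?_⟩
    have hfk : O.toOPAS.dom.factorThru (prod.lift a b) hd = k := by
      rw [← cancel_mono O.toOPAS.dom.arrow, Subobject.factorThru_arrow]
      apply Limits.prod.hom_ext
      · rw [prod.lift_fst, Category.assoc]; exact ka.symm
      · rw [prod.lift_snd, Category.assoc]; exact kb.symm
    rw [hfk]; exact kc
  · rintro ⟨hd, rfl⟩
    refine ⟨O.toOPAS.dom.factorThru (prod.lift a b) hd, ?_⟩
    apply tuple3
    · rw [Category.assoc, g3_p31, ← Category.assoc, Subobject.factorThru_arrow, prod.lift_fst, t1]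
    · rw [Category.assoc, g3_p32, ← Category.assoc, Subobject.factorThru_arrow, prod.lift_snd, t2]
    · rw [Category.assoc, g3_p33, t3]

end Dir2

section Dir2b

variable [RegularCat E] (O : OPCA E)

lemma hle' : ∀ {Γ : E} (a b : Γ ⟶ O.toOPAS.A),
    (fO O LRel.le).Factors (tupleLift ![a, b]) ↔ O.toOPAS.Le a b :=
  fun a b => hle_O O a b

lemma happ' : ∀ {Γ : E} (a b c : Γ ⟶ O.toOPAS.A),
    (fO O LRel.ap).Factors (tupleLift ![a, b, c]) ↔ O.toOPAS.App a b c :=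
  fun a b c => happ_O O a b c

lemma satRefl {Γ : E} (x : Fin 1 → (Γ ⟶ O.toOPAS.A)) :
    (RegStructure.mk (L := Lg) O.toOPAS.A (fO O)).Sat (leF 0 0) x := by
  rw [sat_leF_iff O.toOPAS (fO O) (hle' O)]
  exact O.le_refl (x 0)

lemma satAntisym {Γ : E} (x : Fin 2 → (Γ ⟶ O.toOPAS.A))
    (hl : (RegStructure.mk (L := Lg) O.toOPAS.A (fO O)).Sat (.and (leF 0 1) (leF 1 0)) x) :
    (RegStructure.mk (L := Lg) O.toOPAS.A (fO O)).Sat (.eq 0 1) x := by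
  rw [sat_and_iff, sat_leF_iff O.toOPAS (fO O) (hle' O),
    sat_leF_iff O.toOPAS (fO O) (hle' O)] at hl
  rw [sat_eq_iff]
  exact O.le_antisymm (x 0) (x 1) hl.1 hl.2

lemma satTrans {Γ : E} (x : Fin 3 → (Γ ⟶ O.toOPAS.A))
    (hl : (RegStructure.mk (L := Lg) O.toOPAS.A (fO O)).Sat (.and (leF 0 1) (leF 1 2)) x) :
    (RegStructure.mk (L := Lg) O.toOPAS.A (fO O)).Sat (leF 0 2) x := by
  rw [sat_and_iff, sat_leF_iff O.toOPAS (fO O) (hle' O),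
    sat_leF_iff O.toOPAS (fO O) (hle' O)] at hl
  rw [sat_leF_iff O.toOPAS (fO O) (hle' O)]
  exact O.le_trans (x 0) (x 1) (x 2) hl.1 hl.2

lemma satSV {Γ : E} (x : Fin 4 → (Γ ⟶ O.toOPAS.A))
    (hl : (RegStructure.mk (L := Lg) O.toOPAS.A (fO O)).Sat (.and (apF 0 1 2) (apF 0 1 3)) x) :
    (RegStructure.mk (L := Lg) O.toOPAS.A (fO O)).Sat (.eq 2 3) x := by
  rw [sat_and_iff, sat_apF_iff O.toOPAS (fO O) (happ' O),
    sat_apF_iff O.toOPAS (fO O) (happ' O)] at hl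
  rw [sat_eq_iff]
  exact O.toOPAS.app_unique hl.1 hl.2

lemma satMono {Γ : E} (x : Fin 5 → (Γ ⟶ O.toOPAS.A))
    (hl : (RegStructure.mk (L := Lg) O.toOPAS.A (fO O)).Sat
      (.and (leF 0 1) (.and (leF 2 3) (apF 1 3 4))) x) :
    (RegStructure.mk (L := Lg) O.toOPAS.A (fO O)).Sat (.ex (.and (apF 0 2 5) (leF 5 4))) x := by
  rw [sat_and_iff, sat_and_iff, sat_leF_iff O.toOPAS (fO O) (hle' O),
    sat_leF_iff O.toOPAS (fO O) (hle' O), sat_apF_iff O.toOPAS (fO O) (happ' O)] at hl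
  obtain ⟨hab, hcd, hbd⟩ := hl
  obtain ⟨hdom, hval⟩ := hbd
  have hd' := O.dom_down (x 0) (x 1) (x 2) (x 3) hab hcd hdom
  have hlew := O.app_mono (x 0) (x 1) (x 2) (x 3) hab hcd hdom
  rw [sat_ex_iff]
  refine ⟨Γ, 𝟙 Γ, isCover_id Γ,
    O.toOPAS.dom.factorThru (prod.lift (x 0) (x 2)) hd' ≫ O.toOPAS.app, ?_⟩
  rw [sat_and_iff, sat_apF_iff O.toOPAS (fO O) (happ' O),
    sat_leF_iff O.toOPAS (fO O) (hle' O)]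
  have vlt : ∀ i : Fin 5,
      (Fin.snoc (fun i => 𝟙 Γ ≫ x i)
        (O.toOPAS.dom.factorThru (prod.lift (x 0) (x 2)) hd' ≫ O.toOPAS.app) :
          Fin 6 → (Γ ⟶ O.toOPAS.A)) i.castSucc = x i := by
    intro i; simp [Fin.snoc_castSucc]
  have vlast :
      (Fin.snoc (fun i => 𝟙 Γ ≫ x i)
        (O.toOPAS.dom.factorThru (prod.lift (x 0) (x 2)) hd' ≫ O.toOPAS.app) :
          Fin 6 → (Γ ⟶ O.toOPAS.A)) (Fin.last 5)
        = O.toOPAS.dom.factorThru (prod.lift (x 0) (x 2)) hd' ≫ O.toOPAS.app := by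
    exact Fin.snoc_last _ _
  have e0 : (0 : Fin 6) = Fin.castSucc 0 := rfl
  have e2 : (2 : Fin 6) = Fin.castSucc 2 := rfl
  have e4 : (4 : Fin 6) = Fin.castSucc 4 := rfl
  have e5 : (5 : Fin 6) = Fin.last 5 := rfl
  constructor
  · rw [e0, e2, e5, vlt, vlt, vlast]
    exact ⟨hd', rfl⟩
  · rw [e4, e5, vlt, vlast]
    rw [hval] at hlew
    exact hlew

lemma satInhab {n : ℕ} (t : PTerm n) {Γ : E} (x : Fin 0 → (Γ ⟶ O.toOPAS.A)) :
    (RegStructure.mk (L := Lg) O.toOPAS.A (fO O)).Sat (.ex (rtF t 0)) x := by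
  rw [sat_ex_iff]
  have hc : IsCover (prod.snd : rSrc O t ⨯ Γ ⟶ Γ) := by
    have hpb := (IsPullback.of_hasBinaryProduct' (X := rSrc O t) (Y := Γ)).flip
    have hcov : IsCover (terminal.from (rSrc O t)) := by
      have he : rCov O t = terminal.from (rSrc O t) := terminal.hom_ext _ _
      rw [← he]; exact (rSpec O t).1
    exact RegularCat.coverStable _ _ _ _ hpb hcov
  refine ⟨rSrc O t ⨯ Γ, prod.snd, hc, prod.fst ≫ rMap O t, ?_⟩
  show (Subobject.mk (image.ι (rMap O t ≫ i1 O.toOPAS.A))).Factors _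
  have hfn : (fun k : Fin 1 =>
      (Fin.snoc (fun i => (prod.snd : rSrc O t ⨯ Γ ⟶ Γ) ≫ x i) (prod.fst ≫ rMap O t) :
        Fin 1 → (rSrc O t ⨯ Γ ⟶ O.toOPAS.A)) (![0] k)) = ![prod.fst ≫ rMap O t] := by
    funext k
    fin_cases k
    exact Fin.snoc_last _ _
  rw [hfn, tuple1, mkFactors_iff]
  refine ⟨prod.fst ≫ factorThruImage (rMap O t ≫ i1 O.toOPAS.A), ?_⟩
  rw [Category.assoc, image.fac, Category.assoc]

lemma satRep {n : ℕ} (t : PTerm n) {Γ : E} (x : Fin (n + 2) → (Γ ⟶ O.toOPAS.A))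
    (hl : (RegStructure.mk (L := Lg) O.toOPAS.A (fO O)).Sat
      (.and (rtF t (Fin.last (n + 1)))
        (evalFml t (fun i => i.castSucc.castSucc) ((Fin.last n).castSucc))) x) :
    (RegStructure.mk (L := Lg) O.toOPAS.A (fO O)).Sat
      (.ex (.and (leF (Fin.last (n + 2)) ((Fin.last n).castSucc.castSucc))
        (evalFml (iterTerm n)
          (Fin.cases ((Fin.last (n + 1)).castSucc) (fun i => i.castSucc.castSucc.castSucc))
          (Fin.last (n + 2))))) x := by
  rw [sat_and_iff] at hl
  obtain ⟨h1, h2⟩ := hl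
  have hEv := eval_of_sat_evalFml O.toOPAS (fO O) (happ' O) t _ _ x h2
  have h1' : (Subobject.mk (image.ι (rMap O t ≫ i1 O.toOPAS.A))).Factors
      (x (Fin.last (n + 1)) ≫ i1 O.toOPAS.A) := by
    have hfn : (fun k : Fin 1 => x (![Fin.last (n + 1)] k)) = ![x (Fin.last (n + 1))] := by
      funext k; fin_cases k; rfl
    have h1'' : (Subobject.mk (image.ι (rMap O t ≫ i1 O.toOPAS.A))).Factors
        (tupleLift fun k : Fin 1 => x (![Fin.last (n + 1)] k)) := h1
    rw [hfn, tuple1] at h1''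
    exact h1''
  set g := rMap O t ≫ i1 O.toOPAS.A with hg
  rw [mkFactors_iff] at h1'
  obtain ⟨k, hk⟩ := h1'
  set c := factorThruImage g with hcdef
  set P := pullback c k with hP
  set q : P ⟶ Γ := pullback.snd c k with hq
  have hqc : IsCover q := by
    have hpb := (IsPullback.of_hasPullback c k).flip
    exact RegularCat.coverStable _ _ _ _ hpb (RegularCat.coverFactorThruImage g)
  have hcond : pullback.fst c k ≫ c = q ≫ k := pullback.condition
  have hfac : c ≫ image.ι g = g := image.fac g
  have h₁ : q ≫ x (Fin.last (n + 1)) ≫ i1 O.toOPAS.A = pullback.fst c k ≫ g := by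
    rw [← hk, ← Category.assoc, ← hcond, Category.assoc, hfac]
  have hclaim : q ≫ x (Fin.last (n + 1)) = pullback.fst c k ≫ rMap O t := by
    rw [← cancel_mono (i1 O.toOPAS.A), Category.assoc, h₁]
    exact (Category.assoc _ _ _).symm
  have hEv' := O.toOPAS.eval_precomp q hEv
  obtain ⟨y, hyle, hyev⟩ := (rSpec O t).2 P (pullback.fst c k)
    (fun i => q ≫ x (i.castSucc.castSucc)) (q ≫ x ((Fin.last n).castSucc)) hEv'
  rw [sat_ex_iff]
  refine ⟨P, q, hqc, y, ?_⟩
  rw [sat_and_iff, sat_leF_iff O.toOPAS (fO O) (hle' O)]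
  have vlt : ∀ i : Fin (n + 2),
      (Fin.snoc (fun i => q ≫ x i) y : Fin (n + 3) → (P ⟶ O.toOPAS.A)) i.castSucc
        = q ≫ x i := by
    intro i; simp [Fin.snoc_castSucc]
  have vlast : (Fin.snoc (fun i => q ≫ x i) y : Fin (n + 3) → (P ⟶ O.toOPAS.A))
      (Fin.last (n + 2)) = y := by simp [Fin.snoc_last]
  constructor
  · rw [vlast, vlt]
    exact hyle
  · apply sat_evalFml_of_eval O.toOPAS (fO O) (happ' O)
    rw [vlast]
    have hass : (fun i : Fin (n + 1) =>
        (Fin.snoc (fun i => q ≫ x i) y : Fin (n + 3) → (P ⟶ O.toOPAS.A))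
          (Fin.cases ((Fin.last (n + 1)).castSucc)
            (fun i : Fin n => i.castSucc.castSucc.castSucc) i))
        = (Fin.cons (pullback.fst c k ≫ rMap O t) (fun i => q ≫ x (i.castSucc.castSucc)) :
            Fin (n + 1) → (P ⟶ O.toOPAS.A)) := by
      funext i
      induction i using Fin.cases with
      | zero =>
        rw [Fin.cases_zero, Fin.cons_zero, vlt, hclaim]
      | succ i =>
        rw [Fin.cases_succ, Fin.cons_succ, vlt]
    rw [hass]
    exact hyev

lemma isModel_O : (RegStructure.mk (L := Lg) O.toOPAS.A (fO O)).IsModel Tg := by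
  intro s hs
  simp only [Tg, Set.mem_setOf_eq] at hs
  rcases hs with rfl | rfl | rfl | rfl | rfl | ⟨n, t, rfl | rfl⟩
  · exact fun {Γ} x _ => satRefl O x
  · exact fun {Γ} x hl => satAntisym O x hl
  · exact fun {Γ} x hl => satTrans O x hl
  · exact fun {Γ} x hl => satSV O x hl
  · exact fun {Γ} x hl => satMono O x hl
  · exact fun {Γ} x _ => satInhab O t x
  · exact fun {Γ} x hl => satRep O t x hl

end Dir2b

/-! ### From models to OPCAs: toolkit -/

lemma sat_rel_iff {L : RegLang} (M : RegStructure L E) {n : ℕ} (r : L.Rel)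
    (g : Fin (L.arity r) → Fin n) {Γ : E} (x : Fin n → (Γ ⟶ M.carrier)) :
    M.Sat (.rel r g) x ↔ (M.interp r).Factors (tupleLift (fun k => x (g k))) := Iff.rfl

lemma sat_verum_iff {L : RegLang} (M : RegStructure L E) {n : ℕ}
    {Γ : E} (x : Fin n → (Γ ⟶ M.carrier)) : M.Sat (.verum) x ↔ True := Iff.rfl

lemma cvt1 {α : Type*} {m : ℕ} (x : Fin m → α) (i : Fin m) :
    (fun k : Fin 1 => x (![i] k)) = ![x i] := by funext k; fin_cases k <;> rfl

lemma cvt2 {α : Type*} {m : ℕ} (x : Fin m → α) (i j : Fin m) :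
    (fun k : Fin 2 => x (![i, j] k)) = ![x i, x j] := by funext k; fin_cases k <;> rfl

lemma cvt3 {α : Type*} {m : ℕ} (x : Fin m → α) (i j l : Fin m) :
    (fun k : Fin 3 => x (![i, j, l] k)) = ![x i, x j, x l] := by funext k; fin_cases k <;> rfl

lemma e31_fst (A : E) : e31 A ≫ prod.fst = p31 A := prod.lift_fst _ _
lemma e31_snd (A : E) : e31 A ≫ prod.snd = p32 A := prod.lift_snd _ _

variable {A : E}

lemma leIff (P : Subobject (npow A 2)) {Γ : E} (a b : Γ ⟶ A) :
    (Subobject.mk (P.arrow ≫ e2 A)).Factors (prod.lift a b) ↔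
      P.Factors (tupleLift ![a, b]) := by
  rw [mkFactors_iff, tuple2, factors_iff']
  constructor
  · rintro ⟨k, hk⟩
    refine ⟨k, ?_⟩
    have := congrArg (· ≫ i2 A) hk
    simpa [Category.assoc, e2_i2] using this
  · rintro ⟨k, hk⟩
    refine ⟨k, ?_⟩
    have := congrArg (· ≫ e2 A) hk
    simpa [Category.assoc, i2_e2] using this

/-- The domain subobject built from a single-valued ternary relation. -/
noncomputable def dom0 (R : Subobject (npow A 3)) (hp : Mono (R.arrow ≫ e31 A)) :
    Subobject (A ⨯ A) :=
  haveI := hp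
  Subobject.mk (R.arrow ≫ e31 A)

/-- The application morphism built from a single-valued ternary relation. -/
noncomputable def app0 (R : Subobject (npow A 3)) (hp : Mono (R.arrow ≫ e31 A)) :
    (dom0 R hp : E) ⟶ A :=
  haveI := hp
  (Subobject.underlyingIso (R.arrow ≫ e31 A)).hom ≫ R.arrow ≫ p33 A

lemma dom0_factors_iff (R : Subobject (npow A 3)) (hp : Mono (R.arrow ≫ e31 A))
    {Γ : E} (f : Γ ⟶ A ⨯ A) :
    (dom0 R hp).Factors f ↔ ∃ k : Γ ⟶ (R : E), k ≫ (R.arrow ≫ e31 A) = f := by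
  haveI := hp
  exact mkFactors_iff _ f

lemma app0_eq (R : Subobject (npow A 3)) (hp : Mono (R.arrow ≫ e31 A))
    {Γ : E} (m : Γ ⟶ (dom0 R hp : E)) (k : Γ ⟶ (R : E))
    (hk : k ≫ (R.arrow ≫ e31 A) = m ≫ (dom0 R hp).arrow) :
    m ≫ app0 R hp = k ≫ R.arrow ≫ p33 A := by
  haveI := hp
  have hm : m ≫ (Subobject.underlyingIso (R.arrow ≫ e31 A)).hom = k := by
    rw [← cancel_mono (R.arrow ≫ e31 A), hk]
    erw [Category.assoc, Subobject.underlyingIso_hom_comp_eq_mk]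
    rfl
  show m ≫ (Subobject.underlyingIso (R.arrow ≫ e31 A)).hom ≫ R.arrow ≫ p33 A = _
  erw [← Category.assoc, hm]

lemma appIff (R : Subobject (npow A 3)) (hp : Mono (R.arrow ≫ e31 A))
    {Γ : E} (a b c : Γ ⟶ A) :
    R.Factors (tupleLift ![a, b, c]) ↔
      ∃ h : (dom0 R hp).Factors (prod.lift a b),
        (dom0 R hp).factorThru (prod.lift a b) h ≫ app0 R hp = c := by
  obtain ⟨t1, t2, t3⟩ := tuple3_comp (A := A) a b c
  rw [factors_iff']
  constructor
  · rintro ⟨k, hk⟩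
    have hlift : k ≫ (R.arrow ≫ e31 A) = prod.lift a b := by
      apply Limits.prod.hom_ext
      · rw [Category.assoc, Category.assoc, e31_fst, prod.lift_fst, ← Category.assoc, hk, t1]
      · rw [Category.assoc, Category.assoc, e31_snd, prod.lift_snd, ← Category.assoc, hk, t2]
    have hd : (dom0 R hp).Factors (prod.lift a b) := (dom0_factors_iff R hp _).mpr ⟨k, hlift⟩
    refine ⟨hd, ?_⟩
    rw [app0_eq R hp _ k (by rw [hlift, Subobject.factorThru_arrow]), ← Category.assoc, hk, t3]
  · rintro ⟨hd, hv⟩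
    obtain ⟨k, hk⟩ := (dom0_factors_iff R hp _).mp hd
    have hv' : k ≫ R.arrow ≫ p33 A = c := by
      rw [← hv, app0_eq R hp _ k (by rw [hk, Subobject.factorThru_arrow])]
    refine ⟨k, ?_⟩
    apply tuple3
    · rw [t1, Category.assoc, ← e31_fst, ← Category.assoc (R.arrow), ← Category.assoc, hk,
        prod.lift_fst]
    · rw [t2, Category.assoc, ← e31_snd, ← Category.assoc (R.arrow), ← Category.assoc, hk,
        prod.lift_snd]
    · rw [t3, Category.assoc, hv']

section Dir1

variable [RegularCat E]

lemma dir1 (M : RegStructure Lg E) (hM : M.IsModel Tg) :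
    ∃ (O : OPCA E) (iso : M.carrier ≅ O.A),
      (∀ {Γ : E} (x y : Γ ⟶ M.carrier),
        (M.interp LRel.le).Factors
            (tupleLift (fun k => ![x, y] (Fin.cast (rfl : Lg.arity LRel.le = 2) k))) ↔
          O.toOPAS.Le (x ≫ iso.hom) (y ≫ iso.hom)) ∧
      (∀ {Γ : E} (x y z : Γ ⟶ M.carrier),
        (M.interp LRel.ap).Factors
            (tupleLift (fun k => ![x, y, z] (Fin.cast (rfl : Lg.arity LRel.ap = 3) k))) ↔
          O.toOPAS.App (x ≫ iso.hom) (y ≫ iso.hom) (z ≫ iso.hom)) := by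
  have m1 : axRefl ∈ Tg.axioms := Or.inl rfl
  have m2 : axAntisym ∈ Tg.axioms := Or.inr (Or.inl rfl)
  have m3 : axTrans ∈ Tg.axioms := Or.inr (Or.inr (Or.inl rfl))
  have m4 : axSV ∈ Tg.axioms := Or.inr (Or.inr (Or.inr (Or.inl rfl)))
  have m5 : axMono ∈ Tg.axioms := Or.inr (Or.inr (Or.inr (Or.inr (Or.inl rfl))))
  have m6 : ∀ {n : ℕ} (t : PTerm n), axInhab t ∈ Tg.axioms :=
    fun t => Or.inr (Or.inr (Or.inr (Or.inr (Or.inr ⟨_, t, Or.inl rfl⟩))))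
  have m7 : ∀ {n : ℕ} (t : PTerm n), axRep t ∈ Tg.axioms :=
    fun t => Or.inr (Or.inr (Or.inr (Or.inr (Or.inr ⟨_, t, Or.inr rfl⟩))))
  -- single-valuedness gives a mono
  have hp : Mono ((M.interp LRel.ap).arrow ≫ e31 M.carrier) := by
    constructor
    intro Γ u v huv
    have h1 : u ≫ (M.interp LRel.ap).arrow ≫ p31 M.carrier
        = v ≫ (M.interp LRel.ap).arrow ≫ p31 M.carrier := by
      have := congrArg (· ≫ prod.fst) huv
      simpa [Category.assoc, e31_fst] using this
    have h2 : u ≫ (M.interp LRel.ap).arrow ≫ p32 M.carrier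
        = v ≫ (M.interp LRel.ap).arrow ≫ p32 M.carrier := by
      have := congrArg (· ≫ prod.snd) huv
      simpa [Category.assoc, e31_snd] using this
    have hx3 : ∀ w : Γ ⟶ ((M.interp LRel.ap) : E),
        tupleLift ![w ≫ (M.interp LRel.ap).arrow ≫ p31 M.carrier,
          w ≫ (M.interp LRel.ap).arrow ≫ p32 M.carrier,
          w ≫ (M.interp LRel.ap).arrow ≫ p33 M.carrier] = w ≫ (M.interp LRel.ap).arrow := by
      intro w
      apply tuple3
      · rw [(tuple3_comp _ _ _).1, Category.assoc]
      · rw [(tuple3_comp _ _ _).2.1, Category.assoc]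
      · rw [(tuple3_comp _ _ _).2.2, Category.assoc]
    have hsat : M.Sat axSV.lhs
        ![u ≫ (M.interp LRel.ap).arrow ≫ p31 M.carrier,
          u ≫ (M.interp LRel.ap).arrow ≫ p32 M.carrier,
          u ≫ (M.interp LRel.ap).arrow ≫ p33 M.carrier,
          v ≫ (M.interp LRel.ap).arrow ≫ p33 M.carrier] := by
      refine (sat_and_iff M _ _ _).mpr ⟨?_, ?_⟩
      · erw [sat_rel_iff, cvt3]
        show (M.interp LRel.ap).Factors (tupleLift
          ![u ≫ (M.interp LRel.ap).arrow ≫ p31 M.carrier,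
            u ≫ (M.interp LRel.ap).arrow ≫ p32 M.carrier,
            u ≫ (M.interp LRel.ap).arrow ≫ p33 M.carrier])
        rw [hx3 u]
        exact (factors_iff' _ _).mpr ⟨u, rfl⟩
      · erw [sat_rel_iff, cvt3]
        show (M.interp LRel.ap).Factors (tupleLift
          ![u ≫ (M.interp LRel.ap).arrow ≫ p31 M.carrier,
            u ≫ (M.interp LRel.ap).arrow ≫ p32 M.carrier,
            v ≫ (M.interp LRel.ap).arrow ≫ p33 M.carrier])
        rw [h1, h2, hx3 v]
        exact (factors_iff' _ _).mpr ⟨v, rfl⟩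
    have hres := hM axSV m4 _ hsat
    have h3 : u ≫ (M.interp LRel.ap).arrow ≫ p33 M.carrier
        = v ≫ (M.interp LRel.ap).arrow ≫ p33 M.carrier := hres
    have harr : u ≫ (M.interp LRel.ap).arrow = v ≫ (M.interp LRel.ap).arrow := by
      apply tuple3 <;> rw [Category.assoc, Category.assoc]
      · exact h1
      · exact h2
      · exact h3
    exact (cancel_mono (M.interp LRel.ap).arrow).mp harr
  -- order lemmas
  have hleIff : ∀ {Γ : E} (a b : Γ ⟶ M.carrier),
      (Subobject.mk ((M.interp LRel.le).arrow ≫ e2 M.carrier)).Factors (prod.lift a b) ↔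
        (M.interp LRel.le).Factors (tupleLift ![a, b]) :=
    fun a b => leIff _ a b
  have lerefl : ∀ {Γ : E} (a : Γ ⟶ M.carrier),
      (Subobject.mk ((M.interp LRel.le).arrow ≫ e2 M.carrier)).Factors (prod.lift a a) := by
    intro Γ a
    refine (hleIff a a).mpr ?_
    have h := hM axRefl m1 (fun _ => a) trivial
    simp only [axRefl] at h
    rw [sat_rel_iff] at h
    have hfn : ![a, a] = (fun _ : Fin 2 => a) := by funext k; fin_cases k <;> rfl
    rw [hfn]
    exact h
  have leantisym : ∀ {Γ : E} (a b : Γ ⟶ M.carrier),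
      (Subobject.mk ((M.interp LRel.le).arrow ≫ e2 M.carrier)).Factors (prod.lift a b) →
      (Subobject.mk ((M.interp LRel.le).arrow ≫ e2 M.carrier)).Factors (prod.lift b a) →
      a = b := by
    intro Γ a b hab hba
    have hsat : M.Sat axAntisym.lhs ![a, b] := by
      refine (sat_and_iff M _ _ _).mpr ⟨?_, ?_⟩
      · erw [sat_rel_iff, cvt2]; exact (hleIff a b).mp hab
      · erw [sat_rel_iff, cvt2]; exact (hleIff b a).mp hba
    exact hM axAntisym m2 _ hsat
  have letrans : ∀ {Γ : E} (a b c : Γ ⟶ M.carrier),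
      (Subobject.mk ((M.interp LRel.le).arrow ≫ e2 M.carrier)).Factors (prod.lift a b) →
      (Subobject.mk ((M.interp LRel.le).arrow ≫ e2 M.carrier)).Factors (prod.lift b c) →
      (Subobject.mk ((M.interp LRel.le).arrow ≫ e2 M.carrier)).Factors (prod.lift a c) := by
    intro Γ a b c hab hbc
    have hsat : M.Sat axTrans.lhs ![a, b, c] := by
      refine (sat_and_iff M _ _ _).mpr ⟨?_, ?_⟩
      · erw [sat_rel_iff, cvt2]; exact (hleIff a b).mp hab
      · erw [sat_rel_iff, cvt2]; exact (hleIff b c).mp hbc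
    have h := hM axTrans m3 _ hsat
    simp only [axTrans] at h
    rw [sat_rel_iff, cvt2] at h
    exact (hleIff a c).mpr h
  -- downward closure and monotonicity via axMono
  have key : ∀ {Γ : E} (a b c d : Γ ⟶ M.carrier),
      (Subobject.mk ((M.interp LRel.le).arrow ≫ e2 M.carrier)).Factors (prod.lift a b) →
      (Subobject.mk ((M.interp LRel.le).arrow ≫ e2 M.carrier)).Factors (prod.lift c d) →
      ∀ hbd : (dom0 (M.interp LRel.ap) hp).Factors (prod.lift b d),
      ∃ hac : (dom0 (M.interp LRel.ap) hp).Factors (prod.lift a c),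
        (Subobject.mk ((M.interp LRel.le).arrow ≫ e2 M.carrier)).Factors
          (prod.lift
            ((dom0 (M.interp LRel.ap) hp).factorThru (prod.lift a c) hac ≫
              app0 (M.interp LRel.ap) hp)
            ((dom0 (M.interp LRel.ap) hp).factorThru (prod.lift b d) hbd ≫
              app0 (M.interp LRel.ap) hp)) := by
    intro Γ a b c d hab hcd hbd
    obtain ⟨k, hk⟩ := (dom0_factors_iff _ hp _).mp hbd
    have hfb : k ≫ (M.interp LRel.ap).arrow ≫ p31 M.carrier = b := by
      have := congrArg (· ≫ prod.fst) hk
      simpa [Category.assoc, e31_fst, prod.lift_fst] using this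
    have hfd : k ≫ (M.interp LRel.ap).arrow ≫ p32 M.carrier = d := by
      have := congrArg (· ≫ prod.snd) hk
      simpa [Category.assoc, e31_snd, prod.lift_snd] using this
    have hR : (M.interp LRel.ap).Factors
        (tupleLift ![b, d, k ≫ (M.interp LRel.ap).arrow ≫ p33 M.carrier]) := by
      refine (factors_iff' _ _).mpr ⟨k, ?_⟩
      apply tuple3
      · rw [(tuple3_comp _ _ _).1, Category.assoc]; exact hfb
      · rw [(tuple3_comp _ _ _).2.1, Category.assoc]; exact hfd
      · rw [(tuple3_comp _ _ _).2.2, Category.assoc]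
    have hsat : M.Sat axMono.lhs
        ![a, b, c, d, k ≫ (M.interp LRel.ap).arrow ≫ p33 M.carrier] := by
      refine (sat_and_iff M _ _ _).mpr ⟨?_, (sat_and_iff M _ _ _).mpr ⟨?_, ?_⟩⟩
      · erw [sat_rel_iff, cvt2]; exact (hleIff a b).mp hab
      · erw [sat_rel_iff, cvt2]; exact (hleIff c d).mp hcd
      · erw [sat_rel_iff, cvt3]; exact hR
    have hres := hM axMono m5 _ hsat
    simp only [axMono] at hres
    rw [sat_ex_iff] at hres
    obtain ⟨Δ, e, he, w, hw⟩ := hres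
    rw [sat_and_iff, sat_rel_iff, sat_rel_iff, cvt3, cvt2] at hw
    obtain ⟨hw1, hw2⟩ := hw
    have vlt : ∀ i : Fin 5, (Fin.snoc
        (fun i => e ≫ ![a, b, c, d, k ≫ (M.interp LRel.ap).arrow ≫ p33 M.carrier] i) w :
          Fin 6 → (Δ ⟶ M.carrier)) i.castSucc
        = e ≫ ![a, b, c, d, k ≫ (M.interp LRel.ap).arrow ≫ p33 M.carrier] i := by
      intro i; simp [Fin.snoc_castSucc]
    have vlast : (Fin.snoc
        (fun i => e ≫ ![a, b, c, d, k ≫ (M.interp LRel.ap).arrow ≫ p33 M.carrier] i) w :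
          Fin 6 → (Δ ⟶ M.carrier)) (Fin.last 5) = w := by exact Fin.snoc_last _ _
    have hv0 : (Fin.snoc
        (fun i => e ≫ ![a, b, c, d, k ≫ (M.interp LRel.ap).arrow ≫ p33 M.carrier] i) w :
          Fin 6 → (Δ ⟶ M.carrier)) 0 = e ≫ a := vlt 0
    have hv2 : (Fin.snoc
        (fun i => e ≫ ![a, b, c, d, k ≫ (M.interp LRel.ap).arrow ≫ p33 M.carrier] i) w :
          Fin 6 → (Δ ⟶ M.carrier)) 2 = e ≫ c := vlt 2
    have hv4 : (Fin.snoc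
        (fun i => e ≫ ![a, b, c, d, k ≫ (M.interp LRel.ap).arrow ≫ p33 M.carrier] i) w :
          Fin 6 → (Δ ⟶ M.carrier)) 4
        = e ≫ (k ≫ (M.interp LRel.ap).arrow ≫ p33 M.carrier) := vlt 4
    have hv5 : (Fin.snoc
        (fun i => e ≫ ![a, b, c, d, k ≫ (M.interp LRel.ap).arrow ≫ p33 M.carrier] i) w :
          Fin 6 → (Δ ⟶ M.carrier)) 5 = w := vlast
    rw [hv0, hv2, hv5] at hw1
    rw [hv5, hv4] at hw2
    obtain ⟨k', hk'⟩ := (factors_iff' _ _).mp hw1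
    have hk'' : k' ≫ ((M.interp LRel.ap).arrow ≫ e31 M.carrier) = e ≫ prod.lift a c := by
      apply Limits.prod.hom_ext
      · simp only [Category.assoc, e31_fst, prod.lift_fst]
        rw [← Category.assoc, hk', (tuple3_comp _ _ _).1]
      · simp only [Category.assoc, e31_snd, prod.lift_snd]
        rw [← Category.assoc, hk', (tuple3_comp _ _ _).2.1]
    have hac : (dom0 (M.interp LRel.ap) hp).Factors (prod.lift a c) := by
      apply factors_of_cover _ he
      exact (dom0_factors_iff _ hp _).mpr ⟨k', hk''⟩
    refine ⟨hac, ?_⟩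
    have hw' : w = k' ≫ (M.interp LRel.ap).arrow ≫ p33 M.carrier := by
      rw [← Category.assoc, hk', (tuple3_comp _ _ _).2.2]
    have hew : e ≫ ((dom0 (M.interp LRel.ap) hp).factorThru (prod.lift a c) hac ≫
        app0 (M.interp LRel.ap) hp) = w := by
      rw [← Category.assoc]
      rw [app0_eq (M.interp LRel.ap) hp _ k'
        (by rw [hk'', Category.assoc, Subobject.factorThru_arrow])]
      exact hw'.symm
    have hval : k ≫ (M.interp LRel.ap).arrow ≫ p33 M.carrier
        = (dom0 (M.interp LRel.ap) hp).factorThru (prod.lift b d) hbd ≫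
          app0 (M.interp LRel.ap) hp := by
      rw [app0_eq (M.interp LRel.ap) hp _ k (by rw [hk, Subobject.factorThru_arrow])]
    apply factors_of_cover _ he
    rw [prod.comp_lift, hew, ← hval]
    exact (hleIff _ _).mpr hw2
  -- assemble the OPAS
  let S : OPAS E :=
    { A := M.carrier
      le := Subobject.mk ((M.interp LRel.le).arrow ≫ e2 M.carrier)
      le_refl := fun {Γ} a => lerefl a
      le_antisymm := fun {Γ} a b h h' => leantisym a b h h'
      le_trans := fun {Γ} a b c h h' => letrans a b c h h'
      dom := dom0 (M.interp LRel.ap) hp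
      app := app0 (M.interp LRel.ap) hp
      dom_down := fun {Γ} a b c d hab hcd h => (key a b c d hab hcd h).choose
      app_mono := fun {Γ} a b c d hab hcd h => (key a b c d hab hcd h).choose_spec }
  have happS : ∀ {Γ : E} (a b c : Γ ⟶ M.carrier),
      (M.interp LRel.ap).Factors (tupleLift ![a, b, c]) ↔ S.App a b c :=
    fun a b c => appIff (M.interp LRel.ap) hp a b c
  have hleS : ∀ {Γ : E} (a b : Γ ⟶ M.carrier),
      (M.interp LRel.le).Factors (tupleLift ![a, b]) ↔ S.Le a b :=
    fun a b => (hleIff a b).symm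
  -- completeness
  have complete' : ∀ {n : ℕ} (t : PTerm n), ∃ (Γ : E) (e : Γ ⟶ ⊤_ E) (r : Γ ⟶ S.A),
      IsCover e ∧ S.RepresentsAt t r := by
    intro n t
    have h := hM (axInhab t) (m6 t) (Γ := ⊤_ E) (fun i : Fin 0 => i.elim0) trivial
    simp only [axInhab] at h
    rw [sat_ex_iff] at h
    obtain ⟨Δ, e, he, r', hr'⟩ := h
    refine ⟨Δ, e, r', he, ?_⟩
    rw [sat_rel_iff, cvt1] at hr'
    have hr1 : (M.interp (LRel.rt n t)).Factors (tupleLift ![r']) := by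
      have h0 : (Fin.snoc (fun i : Fin 0 => e ≫ i.elim0) r' : Fin 1 → (Δ ⟶ M.carrier)) 0
          = r' := Fin.snoc_last _ _
      rw [h0] at hr'
      exact hr'
    intro Δ' gg xx v hEval
    -- instantiate axRep
    have hsat : M.Sat (axRep t).lhs
        (Fin.snoc (Fin.snoc xx v : Fin (n + 1) → (Δ' ⟶ M.carrier)) (gg ≫ r')) := by
      refine (sat_and_iff M _ _ _).mpr ⟨?_, ?_⟩
      · erw [sat_rel_iff, cvt1]
        have hlast : (Fin.snoc (Fin.snoc xx v : Fin (n + 1) → (Δ' ⟶ M.carrier)) (gg ≫ r') :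
            Fin (n + 2) → (Δ' ⟶ M.carrier)) (Fin.last (n + 1)) = gg ≫ r' :=
          Fin.snoc_last _ _
        erw [hlast, tuple1, Category.assoc, ← tuple1]
        exact factors_precomp _ gg hr1
      · apply sat_evalFml_of_eval S M.interp happS t
        have h1 : (fun i : Fin n =>
            (Fin.snoc (Fin.snoc xx v : Fin (n + 1) → (Δ' ⟶ M.carrier)) (gg ≫ r') :
              Fin (n + 2) → (Δ' ⟶ M.carrier)) (i.castSucc.castSucc)) = xx := by
          funext i; simp [Fin.snoc_castSucc]
        have h2 : (Fin.snoc (Fin.snoc xx v : Fin (n + 1) → (Δ' ⟶ M.carrier)) (gg ≫ r') :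
            Fin (n + 2) → (Δ' ⟶ M.carrier)) ((Fin.last n).castSucc) = v := by
          simp [Fin.snoc_castSucc, Fin.snoc_last]
        erw [h1, h2]
        exact hEval
    have hres := hM (axRep t) (m7 t) _ hsat
    simp only [axRep] at hres
    rw [sat_ex_iff] at hres
    obtain ⟨Δ'', q, hq, y', hy⟩ := hres
    rw [sat_and_iff, sat_rel_iff, cvt2] at hy
    obtain ⟨hyle, hyev⟩ := hy
    have hEv' := eval_of_sat_evalFml S M.interp happS (iterTerm n) _ _ _ hyev
    -- compute the assignment
    have vlast : (Fin.snoc (fun i =>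
        q ≫ (Fin.snoc (Fin.snoc xx v : Fin (n + 1) → (Δ' ⟶ M.carrier)) (gg ≫ r') :
          Fin (n + 2) → (Δ' ⟶ M.carrier)) i) y' : Fin (n + 3) → (Δ'' ⟶ M.carrier))
        (Fin.last (n + 2)) = y' := Fin.snoc_last _ _
    have vlt : ∀ i : Fin (n + 2), (Fin.snoc (fun i =>
        q ≫ (Fin.snoc (Fin.snoc xx v : Fin (n + 1) → (Δ' ⟶ M.carrier)) (gg ≫ r') :
          Fin (n + 2) → (Δ' ⟶ M.carrier)) i) y' : Fin (n + 3) → (Δ'' ⟶ M.carrier))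
        i.castSucc
        = q ≫ (Fin.snoc (Fin.snoc xx v : Fin (n + 1) → (Δ' ⟶ M.carrier)) (gg ≫ r') :
          Fin (n + 2) → (Δ' ⟶ M.carrier)) i := fun i => Fin.snoc_castSucc _ _ _
    have hass : (fun i : Fin (n + 1) => (Fin.snoc (fun i =>
        q ≫ (Fin.snoc (Fin.snoc xx v : Fin (n + 1) → (Δ' ⟶ M.carrier)) (gg ≫ r') :
          Fin (n + 2) → (Δ' ⟶ M.carrier)) i) y' : Fin (n + 3) → (Δ'' ⟶ M.carrier))
        (Fin.cases ((Fin.last (n + 1)).castSucc)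
          (fun i : Fin n => i.castSucc.castSucc.castSucc) i))
        = fun i => q ≫ (Fin.cons (gg ≫ r') xx : Fin (n + 1) → (Δ' ⟶ M.carrier)) i := by
      funext i
      induction i using Fin.cases with
      | zero =>
        rw [Fin.cases_zero, Fin.cons_zero, vlt, Fin.snoc_last]
      | succ i =>
        rw [Fin.cases_succ, Fin.cons_succ, vlt]
        have : (Fin.snoc (Fin.snoc xx v : Fin (n + 1) → (Δ' ⟶ M.carrier)) (gg ≫ r') :
            Fin (n + 2) → (Δ' ⟶ M.carrier)) (i.castSucc.castSucc) = xx i := by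
          simp [Fin.snoc_castSucc]
        rw [this]
    rw [hass, vlast] at hEv'
    obtain ⟨y₀, hy₀, hEv0⟩ := S.eval_descend hq hEv'
    refine ⟨y₀, ?_, hEv0⟩
    -- the order part
    have hle1 : (M.interp LRel.le).Factors (tupleLift ![y', q ≫ v]) := by
      have e1 : (Fin.snoc (fun i =>
          q ≫ (Fin.snoc (Fin.snoc xx v : Fin (n + 1) → (Δ' ⟶ M.carrier)) (gg ≫ r') :
            Fin (n + 2) → (Δ' ⟶ M.carrier)) i) y' : Fin (n + 3) → (Δ'' ⟶ M.carrier))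
          ((Fin.last n).castSucc.castSucc) = q ≫ v := by
        rw [vlt]
        have : (Fin.snoc (Fin.snoc xx v : Fin (n + 1) → (Δ' ⟶ M.carrier)) (gg ≫ r') :
            Fin (n + 2) → (Δ' ⟶ M.carrier)) ((Fin.last n).castSucc) = v := by
          simp [Fin.snoc_castSucc, Fin.snoc_last]
        rw [this]
      rw [vlast, e1] at hyle
      exact hyle
    have hle2 : S.le.Factors (prod.lift y' (q ≫ v)) := (hleS _ _).mp hle1
    rw [hy₀, ← prod.comp_lift] at hle2
    exact factors_of_cover _ hq _ hle2
  -- conclude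
  refine ⟨⟨S, complete'⟩, Iso.refl M.carrier, ?_, ?_⟩
  · intro Γ x y
    have hcast : (fun k => ![x, y] (Fin.cast (rfl : Lg.arity LRel.le = 2) k)) = ![x, y] :=
      funext fun k => rfl
    rw [hcast]
    show (M.interp LRel.le).Factors (tupleLift ![x, y]) ↔
      S.Le (x ≫ 𝟙 M.carrier) (y ≫ 𝟙 M.carrier)
    rw [Category.comp_id, Category.comp_id]
    exact hleS x y
  · intro Γ x y z
    have hcast : (fun k => ![x, y, z] (Fin.cast (rfl : Lg.arity LRel.ap = 3) k)) = ![x, y, z] :=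
      funext fun k => rfl
    rw [hcast]
    show (M.interp LRel.ap).Factors (tupleLift ![x, y, z]) ↔
      S.App (x ≫ 𝟙 M.carrier) (y ≫ 𝟙 M.carrier) (z ≫ 𝟙 M.carrier)
    rw [Category.comp_id, Category.comp_id, Category.comp_id]
    exact happS x y z



end Dir1

lemma dir2 [RegularCat E] (O : OPCA E) :
    ∃ M : RegStructure Lg E, M.IsModel Tg ∧
      ∃ iso : M.carrier ≅ O.A,
        (∀ {Γ : E} (x y : Γ ⟶ M.carrier),
          (M.interp LRel.le).Factors
              (tupleLift (fun k => ![x, y] (Fin.cast (rfl : Lg.arity LRel.le = 2) k))) ↔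
            O.toOPAS.Le (x ≫ iso.hom) (y ≫ iso.hom)) ∧
        (∀ {Γ : E} (x y z : Γ ⟶ M.carrier),
          (M.interp LRel.ap).Factors
              (tupleLift (fun k => ![x, y, z] (Fin.cast (rfl : Lg.arity LRel.ap = 3) k))) ↔
            O.toOPAS.App (x ≫ iso.hom) (y ≫ iso.hom) (z ≫ iso.hom)) := by
  refine ⟨RegStructure.mk (L := Lg) O.toOPAS.A (fO O), isModel_O O, Iso.refl _, ?_, ?_⟩
  · intro Γ x y
    have hcast : (fun k => ![x, y] (Fin.cast (rfl : Lg.arity LRel.le = 2) k)) = ![x, y] :=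
      funext fun k => rfl
    rw [hcast]
    show (fO O LRel.le).Factors (tupleLift ![x, y]) ↔
      O.toOPAS.Le (x ≫ 𝟙 O.toOPAS.A) (y ≫ 𝟙 O.toOPAS.A)
    rw [Category.comp_id, Category.comp_id]
    exact hle_O O x y
  · intro Γ x y z
    have hcast : (fun k => ![x, y, z] (Fin.cast (rfl : Lg.arity LRel.ap = 3) k)) = ![x, y, z] :=
      funext fun k => rfl
    rw [hcast]
    show (fO O LRel.ap).Factors (tupleLift ![x, y, z]) ↔
      O.toOPAS.App (x ≫ 𝟙 O.toOPAS.A) (y ≫ 𝟙 O.toOPAS.A) (z ≫ 𝟙 O.toOPAS.A)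
    rw [Category.comp_id, Category.comp_id, Category.comp_id]
    exact happ_O O x y z

/-- Statement 14: there is a regular theory — in a language with a binary
relation `≤` and a ternary relation `xy↓z` — whose models in any regular category
are exactly the ordered partial combinatory algebras. -/
theorem statement14 :
    ∃ (L : RegLang) (T : RegTheory L) (leR appR : L.Rel)
      (h2 : L.arity leR = 2) (h3 : L.arity appR = 3),
      ∀ (E : Type u) [Category.{v} E] [RegularCat E],
        (∀ M : RegStructure L E, M.IsModel T →
          ∃ (O : OPCA E) (iso : M.carrier ≅ O.A),
            (∀ {Γ : E} (x y : Γ ⟶ M.carrier),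
              (M.interp leR).Factors (tupleLift (fun k => ![x, y] (Fin.cast h2 k))) ↔
                O.toOPAS.Le (x ≫ iso.hom) (y ≫ iso.hom)) ∧
            (∀ {Γ : E} (x y z : Γ ⟶ M.carrier),
              (M.interp appR).Factors (tupleLift (fun k => ![x, y, z] (Fin.cast h3 k))) ↔
                O.toOPAS.App (x ≫ iso.hom) (y ≫ iso.hom) (z ≫ iso.hom))) ∧
        (∀ O : OPCA E, ∃ M : RegStructure L E, M.IsModel T ∧
          ∃ iso : M.carrier ≅ O.A,
            (∀ {Γ : E} (x y : Γ ⟶ M.carrier),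
              (M.interp leR).Factors (tupleLift (fun k => ![x, y] (Fin.cast h2 k))) ↔
                O.toOPAS.Le (x ≫ iso.hom) (y ≫ iso.hom)) ∧
            (∀ {Γ : E} (x y z : Γ ⟶ M.carrier),
              (M.interp appR).Factors (tupleLift (fun k => ![x, y, z] (Fin.cast h3 k))) ↔
                O.toOPAS.App (x ≫ iso.hom) (y ≫ iso.hom) (z ≫ iso.hom))) := by
  refine ⟨Lg, Tg, LRel.le, LRel.ap, rfl, rfl, fun E _ _ => ⟨?_, ?_⟩⟩
  · intro M hM
    exact dir1 M hM
  · intro O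
    exact dir2 O

end RRC
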